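/- arXiv:1409.7171 — 2 statements merged into one kernel-verified Lean document; each statement's English description precedes it below -/
import Mathlib

section
/- Let f, g ∈ C²_c(E) (twice continuously differentiable with compact support) such that g is constant on an open neighborhood U (in the subspace topology of E) of supp(f). Then 𝓔(f,g) = Σ_{∅≠B⊂I} ∫_{E₊(B)} (∇^B f, ∇^B g) dμ_B = 0, i.e., the bilinear form is strongly local on C²_c(E). -/
open MeasureTheory Set

noncomputable section

def orthE (n : ℕ) : Set (Fin n → ℝ) := {x | ∀ i, 0 ≤ x i}

def Eplus (n : ℕ) (B : Finset (Fin n)) : Set (Fin n → ℝ) :=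
  {x | (∀ i ∈ B, 0 < x i) ∧ (∀ i ∉ B, x i = 0)}

def lamB (n : ℕ) (B : Finset (Fin n)) : Measure (Fin n → ℝ) :=
  Measure.pi fun i => if i ∈ B then volume.restrict (Ici (0 : ℝ)) else Measure.dirac 0

def mMeas (n : ℕ) (β : ℝ) : Measure (Fin n → ℝ) :=
  ∑ B : Finset (Fin n), (ENNReal.ofReal β) ^ (n - B.card) • lamB n B

/-- `μ_B = ϱ β^{n−#B} λ_B^{(n)}`. -/
def muB (n : ℕ) (β : ℝ) (ϱ : (Fin n → ℝ) → ℝ) (B : Finset (Fin n)) :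
    Measure (Fin n → ℝ) :=
  ((ENNReal.ofReal β) ^ (n - B.card) • lamB n B).withDensity fun x => ENNReal.ofReal (ϱ x)

/-- partial derivative `∂ᵢ f` -/
def pd (n : ℕ) (i : Fin n) (f : (Fin n → ℝ) → ℝ) (x : Fin n → ℝ) : ℝ :=
  fderiv ℝ f x (Pi.single i 1)

/-- `𝓔(f,g) = Σ_{∅≠B⊂I} ∫_{E₊(B)} (∇^B f, ∇^B g) dμ_B`. -/
def energyForm (n : ℕ) (β : ℝ) (ϱ : (Fin n → ℝ) → ℝ) (f g : (Fin n → ℝ) → ℝ) : ℝ :=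
  ∑ B ∈ Finset.univ.filter (fun B : Finset (Fin n) => B ≠ ∅),
    ∫ x in Eplus n B, (∑ i ∈ B, pd n i f x * pd n i g x) ∂(muB n β ϱ B)

theorem stmt3 (n : ℕ) (β : ℝ) (hβ : 0 < β) (ϱ : (Fin n → ℝ) → ℝ)
    (hϱnn : ∀ x, 0 ≤ ϱ x) (hϱint : Integrable ϱ (mMeas n β))
    (f g : (Fin n → ℝ) → ℝ)
    (hf : ContDiff ℝ 2 f) (hfc : HasCompactSupport f)
    (hg : ContDiff ℝ 2 g) (hgc : HasCompactSupport g)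
    (U : Set (Fin n → ℝ)) (hU : IsOpen U) (hsub : tsupport f ∩ orthE n ⊆ U)
    (c : ℝ) (hgconst : ∀ x ∈ U ∩ orthE n, g x = c) :
    energyForm n β ϱ f g = 0 := by
  unfold energyForm
  apply Finset.sum_eq_zero
  intro B hB
  apply setIntegral_eq_zero_of_forall_eq_zero
  intro x hx
  have hxE : x ∈ orthE n := by
    intro i
    by_cases h : i ∈ B
    · exact (hx.1 i h).le
    · exact (hx.2 i h).ge
  apply Finset.sum_eq_zero
  intro i hi
  by_cases hxf : x ∈ tsupport f
  · -- x ∈ U; show pd n i g x = 0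
    have hxU : x ∈ U := hsub ⟨hxf, hxE⟩
    have hxi : 0 < x i := hx.1 i hi
    set v : Fin n → ℝ := Pi.single i (1 : ℝ) with hv
    have hgd : DifferentiableAt ℝ g x :=
      (hg.differentiable (by norm_num)).differentiableAt
    have hline : HasDerivAt (fun t : ℝ => x + t • v) v 0 := by
      simpa using ((hasDerivAt_id (0 : ℝ)).smul_const v).const_add x
    have hcomp : HasDerivAt (fun t : ℝ => g (x + t • v)) (fderiv ℝ g x v) 0 := by
      have hgd' : HasFDerivAt g (fderiv ℝ g x) (x + (0:ℝ) • v) := by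
        simpa using hgd.hasFDerivAt
      exact hgd'.comp_hasDerivAt 0 hline
    obtain ⟨ε, hε, hball⟩ := Metric.isOpen_iff.mp hU x hxU
    have hδ : 0 < min ε (x i) := lt_min hε hxi
    have hvnorm : ‖v‖ ≤ 1 := by
      apply pi_norm_le_iff_of_nonneg zero_le_one |>.2
      intro j
      rw [hv]
      rcases eq_or_ne j i with rfl | hji
      · simp
      · simp [Pi.single_apply, hji]
    have hev : (fun t : ℝ => g (x + t • v)) =ᶠ[nhds (0 : ℝ)] fun _ => c := by
      filter_upwards [Metric.ball_mem_nhds 0 hδ] with t ht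
      rw [Metric.mem_ball, Real.dist_eq, sub_zero] at ht
      have htε : |t| < ε := lt_of_lt_of_le ht (min_le_left _ _)
      have htx : |t| < x i := lt_of_lt_of_le ht (min_le_right _ _)
      have h1 : x + t • v ∈ U := by
        apply hball
        rw [Metric.mem_ball, dist_eq_norm]
        have : ‖x + t • v - x‖ = |t| * ‖v‖ := by
          simp [norm_smul, abs_eq_self.mpr (norm_nonneg v)]
        rw [this]
        calc |t| * ‖v‖ ≤ |t| * 1 := by
              exact mul_le_mul_of_nonneg_left hvnorm (abs_nonneg t)
          _ < ε := by simpa using htε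
      have h2 : x + t • v ∈ orthE n := by
        intro j
        rcases eq_or_ne j i with rfl | hji
        · simp only [Pi.add_apply, Pi.smul_apply, hv, Pi.single_eq_same, smul_eq_mul,
            mul_one]
          have := abs_lt.mp htx
          linarith [this.1]
        · have : v j = 0 := by rw [hv]; exact Pi.single_eq_of_ne hji 1
          simp only [Pi.add_apply, Pi.smul_apply, this, smul_eq_mul, mul_zero, add_zero]
          exact hxE j
      exact hgconst _ ⟨h1, h2⟩
    have hd0 : deriv (fun t : ℝ => g (x + t • v)) 0 = 0 := by
      rw [hev.deriv_eq]; simp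
    have h0 : fderiv ℝ g x v = 0 := by rw [← hcomp.deriv, hd0]
    simp only [pd]; exact mul_eq_zero_of_right _ h0
  · -- f vanishes near x
    have hev : f =ᶠ[nhds x] fun _ => (0 : ℝ) := by
      filter_upwards [(isClosed_tsupport f).isOpen_compl.mem_nhds hxf] with y hy
      exact image_eq_zero_of_notMem_tsupport hy
    have : fderiv ℝ f x = 0 := by
      rw [hev.fderiv_eq]; exact fderiv_const_apply 0
    simp [pd, this]
end
end

section
/- For f, g ∈ C²_c(E) the identity 2·𝓔(gf, g) − 𝓔(g², f) = ∫_E f · (2 Σ_{∅≠B⊂I} Σ_{i∈B} (∂ᵢg)² 𝟙_{E₊(B)}) dμ holds, where μ = Σ_{∅≠B⊂I} μ_B. In other words, the energy measure of g ∈ C²_c(E) is ν_{⟨g⟩} = 2 Σ_{∅≠B⊂I} |∇^B g|² μ_B. -/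
open MeasureTheory Set

noncomputable section

lemma muB_finite (n : ℕ) (β : ℝ) (ϱ : (Fin n → ℝ) → ℝ)
    (hϱnn : ∀ x, 0 ≤ ϱ x) (hϱint : Integrable ϱ (mMeas n β)) (B : Finset (Fin n)) :
    IsFiniteMeasure (muB n β ϱ B) := by
  constructor
  rw [muB, withDensity_apply _ MeasurableSet.univ, setLIntegral_univ]
  calc ∫⁻ x, ENNReal.ofReal (ϱ x) ∂((ENNReal.ofReal β) ^ (n - B.card) • lamB n B)
      ≤ ∑ C : Finset (Fin n),
          ∫⁻ x, ENNReal.ofReal (ϱ x) ∂((ENNReal.ofReal β) ^ (n - C.card) • lamB n C) :=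
        Finset.single_le_sum (f := fun C : Finset (Fin n) =>
          ∫⁻ x, ENNReal.ofReal (ϱ x) ∂((ENNReal.ofReal β) ^ (n - C.card) • lamB n C))
          (fun _ _ => zero_le) (Finset.mem_univ B)
    _ = ∫⁻ x, ENNReal.ofReal (ϱ x) ∂(mMeas n β) := by
        rw [mMeas, lintegral_finset_sum_measure]
    _ = ∫⁻ x, (‖ϱ x‖₊ : ENNReal) ∂(mMeas n β) := by
        congr 1; funext x; exact (Real.enorm_eq_ofReal (hϱnn x)).symm
    _ < ⊤ := hϱint.2

lemma pd_continuous (n : ℕ) (i : Fin n) (f : (Fin n → ℝ) → ℝ) (hf : ContDiff ℝ 2 f) :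
    Continuous (pd n i f) := by
  have h1 : Continuous (fderiv ℝ f) := hf.continuous_fderiv two_ne_zero
  exact (ContinuousLinearMap.apply ℝ ℝ (Pi.single i (1:ℝ))).continuous.comp h1

lemma pd_mul (n : ℕ) (i : Fin n) (f g : (Fin n → ℝ) → ℝ)
    (hf : ContDiff ℝ 2 f) (hg : ContDiff ℝ 2 g) (x : Fin n → ℝ) :
    pd n i (fun y => g y * f y) x = g x * pd n i f x + f x * pd n i g x := by
  have hfd := (hf.differentiable two_ne_zero) x
  have hgd := (hg.differentiable two_ne_zero) x
  simp only [pd, fderiv_fun_mul hgd hfd]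
  simp [mul_comm]

lemma pd_sq (n : ℕ) (i : Fin n) (g : (Fin n → ℝ) → ℝ)
    (hg : ContDiff ℝ 2 g) (x : Fin n → ℝ) :
    pd n i (fun y => g y ^ 2) x = 2 * g x * pd n i g x := by
  have h : pd n i (fun y => g y * g y) x = g x * pd n i g x + g x * pd n i g x :=
    pd_mul n i g g hg hg x
  have h2 : (fun y => g y ^ 2) = fun y => g y * g y := by funext y; ring
  rw [h2, h]; ring

/-- The energy measure identity `2𝓔(gf,g) − 𝓔(g²,f) = ∫ f dν_⟨g⟩` with
`ν_⟨g⟩ = 2 Σ_{∅≠B⊂I} |∇^B g|² μ_B`. -/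
theorem stmt6 (n : ℕ) (β : ℝ) (hβ : 0 < β) (ϱ : (Fin n → ℝ) → ℝ)
    (hϱnn : ∀ x, 0 ≤ ϱ x) (hϱmeas : Measurable ϱ) (hϱint : Integrable ϱ (mMeas n β))
    (f g : (Fin n → ℝ) → ℝ)
    (hf : ContDiff ℝ 2 f) (hfc : HasCompactSupport f)
    (hg : ContDiff ℝ 2 g) (hgc : HasCompactSupport g) :
    2 * energyForm n β ϱ (fun x => g x * f x) g -
        energyForm n β ϱ (fun x => g x ^ 2) f =
      2 * ∑ B ∈ Finset.univ.filter (fun B : Finset (Fin n) => B ≠ ∅),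
        ∫ x in Eplus n B, f x * (∑ i ∈ B, pd n i g x ^ 2) ∂(muB n β ϱ B) := by
  -- pointwise derivative identities
  classical
  simp only [energyForm]
  rw [Finset.mul_sum, Finset.mul_sum, ← Finset.sum_sub_distrib]
  apply Finset.sum_congr rfl
  intro B _
  haveI hfin : IsFiniteMeasure (muB n β ϱ B) := muB_finite n β ϱ hϱnn hϱint B
  set μ := (muB n β ϱ B).restrict (Eplus n B) with hμ
  haveI : IsFiniteMeasure μ := by rw [hμ]; infer_instance
  -- the three integrands
  set C2 : (Fin n → ℝ) → ℝ := fun x => ∑ i ∈ B, g x * pd n i g x * pd n i f x with hC2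
  set D : (Fin n → ℝ) → ℝ := fun x => f x * ∑ i ∈ B, pd n i g x ^ 2 with hD
  have hC2cont : Continuous C2 := by
    apply continuous_finset_sum
    intro i _
    exact ((hg.continuous.mul (pd_continuous n i g hg)).mul (pd_continuous n i f hf))
  have hDcont : Continuous D := by
    apply hf.continuous.mul
    exact continuous_finset_sum _ fun i _ => (pd_continuous n i g hg).pow 2
  have hC2supp : HasCompactSupport C2 := by
    apply hgc.mono
    intro x hx
    simp only [C2, Function.mem_support, ne_eq] at hx ⊢
    intro hgx
    apply hx
    apply Finset.sum_eq_zero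
    intro i _
    rw [hgx]; ring
  have hDsupp : HasCompactSupport D := by
    apply hfc.mono
    intro x hx
    simp only [D, Function.mem_support, ne_eq] at hx ⊢
    intro hfx; apply hx; rw [hfx]; ring
  have hC2int : Integrable C2 μ := (hC2cont.integrable_of_hasCompactSupport hC2supp)
  have hDint : Integrable D μ := (hDcont.integrable_of_hasCompactSupport hDsupp)
  have e1 : (∫ x, (∑ i ∈ B, pd n i (fun y => g y * f y) x * pd n i g x) ∂μ)
      = (∫ x, C2 x ∂μ) + (∫ x, D x ∂μ) := by
    rw [← integral_add hC2int hDint]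
    apply integral_congr_ae
    filter_upwards with x
    simp only [C2, D]
    rw [Finset.mul_sum, ← Finset.sum_add_distrib]
    apply Finset.sum_congr rfl
    intro i _
    rw [pd_mul n i f g hf hg]
    ring
  have e2 : (∫ x, (∑ i ∈ B, pd n i (fun y => g y ^ 2) x * pd n i f x) ∂μ)
      = 2 * ∫ x, C2 x ∂μ := by
    rw [← smul_eq_mul, ← integral_smul]
    apply integral_congr_ae
    filter_upwards with x
    simp only [C2, smul_eq_mul]
    rw [Finset.mul_sum]
    apply Finset.sum_congr rfl
    intro i _
    rw [pd_sq n i g hg]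
    ring
  rw [e1, e2]
  ring
end
end
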